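/- van der Corput lemma: Let G be a countable abelian group with Følner sequence (F_n), and let (x_g)_{g∈G} be a bounded family in a Hilbert space H. If lim_{k→∞} (1/|F_k|) Σ_{h∈F_k} lim_{n→∞} (1/|F_n|) Σ_{g∈F_n} ⟨x_{g+h}, x_g⟩ = 0 (all inner limits assumed to exist), then lim_{n→∞} ‖(1/|F_n|) Σ_{g∈F_n} x_g‖ = 0. -/

import Mathlib

set_option linter.unusedSectionVars false

open Filter

/-- `F` is a Følner sequence in `G`. -/
def IsFolner {G : Type*} [AddCommGroup G] [DecidableEq G] (F : ℕ → Finset G) : Prop :=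
  (∀ n, (F n).Nonempty) ∧ ∀ g : G,
    Tendsto (fun n => ((symmDiff (F n) ((F n).image (g + ·))).card : ℝ) / (F n).card)
      atTop (nhds 0)

namespace VdC

open Finset Complex

variable {G : Type*} [AddCommGroup G] [DecidableEq G]
  {H : Type*} [NormedAddCommGroup H] [InnerProductSpace ℂ H]
  {E : Type*} [NormedAddCommGroup E] [NormedSpace ℂ E]

local notation "⟪" a ", " b "⟫" => (inner ℂ a b : ℂ)

/-- Difference of a shifted average and the average, bounded by the Følner defect. -/
lemma folner_diff_norm_le (u : G → E) (K : ℝ) (hu : ∀ g, ‖u g‖ ≤ K) (h : G)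
    (s : Finset G) :
    ‖((s.card : ℂ)⁻¹ • ∑ g ∈ s, u (g + h)) - (s.card : ℂ)⁻¹ • ∑ g ∈ s, u g‖
      ≤ ((symmDiff s (s.image (h + ·))).card : ℝ) / s.card * K := by
  classical
  set A := s.image (h + ·) with hA
  have h1 : ∑ g ∈ s, u (g + h) = ∑ g ∈ A, u g := by
    rw [hA, Finset.sum_image (by intro a _ b _ hab; exact add_left_cancel hab)]
    exact Finset.sum_congr rfl fun g _ => by rw [add_comm]
  have h2 : (∑ g ∈ A, u g) - ∑ g ∈ s, u g
      = (∑ g ∈ A \ s, u g) - ∑ g ∈ s \ A, u g := by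
    rw [Finset.sum_sdiff_sub_sum_sdiff]
  have h3 : ‖(∑ g ∈ A, u g) - ∑ g ∈ s, u g‖ ≤ ((symmDiff s A).card : ℝ) * K := by
    rw [h2]
    have hK : (0:ℝ) ≤ K := le_trans (norm_nonneg _) (hu 0)
    have hb : ∀ (t : Finset G), ‖∑ g ∈ t, u g‖ ≤ (t.card : ℝ) * K := by
      intro t
      calc ‖∑ g ∈ t, u g‖ ≤ ∑ g ∈ t, ‖u g‖ := norm_sum_le _ _
        _ ≤ ∑ _g ∈ t, K := Finset.sum_le_sum fun g _ => hu g
        _ = (t.card : ℝ) * K := by simp [mul_comm]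
    calc ‖(∑ g ∈ A \ s, u g) - ∑ g ∈ s \ A, u g‖
        ≤ ‖∑ g ∈ A \ s, u g‖ + ‖∑ g ∈ s \ A, u g‖ := norm_sub_le _ _
      _ ≤ ((A \ s).card : ℝ) * K + ((s \ A).card : ℝ) * K :=
          add_le_add (hb _) (hb _)
      _ = (((s \ A).card + (A \ s).card : ℕ) : ℝ) * K := by push_cast; ring
      _ = ((symmDiff s A).card : ℝ) * K := by
          rw [symmDiff_def, Finset.sup_eq_union]
          rw [Finset.card_union_of_disjoint disjoint_sdiff_sdiff]
  calc ‖((s.card : ℂ)⁻¹ • ∑ g ∈ s, u (g + h)) - (s.card : ℂ)⁻¹ • ∑ g ∈ s, u g‖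
      = ‖((s.card : ℂ)⁻¹ • ((∑ g ∈ A, u g) - ∑ g ∈ s, u g))‖ := by
        rw [h1, smul_sub]
    _ = ((s.card : ℝ))⁻¹ * ‖(∑ g ∈ A, u g) - ∑ g ∈ s, u g‖ := by
        rw [norm_smul, norm_inv, Complex.norm_natCast]
    _ ≤ ((s.card : ℝ))⁻¹ * (((symmDiff s A).card : ℝ) * K) := by
        apply mul_le_mul_of_nonneg_left h3 (by positivity)
    _ = ((symmDiff s A).card : ℝ) / s.card * K := by ring

variable {F : ℕ → Finset G}

lemma folner_compare (hF : IsFolner F) (u : G → E) (K : ℝ) (hu : ∀ g, ‖u g‖ ≤ K) (h : G) :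
    Tendsto (fun n => (((F n).card : ℂ)⁻¹ • ∑ g ∈ F n, u (g + h))
      - ((F n).card : ℂ)⁻¹ • ∑ g ∈ F n, u g) atTop (nhds 0) := by
  apply squeeze_zero_norm (fun n => folner_diff_norm_le u K hu h (F n))
  simpa using (hF.2 h).mul_const K

lemma tendsto_avg_shift (hF : IsFolner F) (u : G → E) (K : ℝ) (hu : ∀ g, ‖u g‖ ≤ K)
    (h : G) {l : E}
    (hl : Tendsto (fun n => ((F n).card : ℂ)⁻¹ • ∑ g ∈ F n, u g) atTop (nhds l)) :
    Tendsto (fun n => ((F n).card : ℂ)⁻¹ • ∑ g ∈ F n, u (g + h)) atTop (nhds l) := by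
  have := (folner_compare hF u K hu h).add hl
  simpa using this


variable (x : G → H) (L : G → ℂ)

/-- The formal combination `∑ c a • x (g + a)`. -/
noncomputable def Tt (c : G →₀ ℂ) (g : G) : H :=
  Finsupp.linearCombination ℂ (fun a => x (g + a)) c

/-- The limiting sesquilinear form (conjugate-linear in the first argument). -/
noncomputable def Lam (c d : G →₀ ℂ) : ℂ :=
  ∑ a ∈ c.support, ∑ b ∈ d.support, (starRingEnd ℂ) (c a) * d b * L (a - b)

/-- The limiting seminorm. -/
noncomputable def Nn (c : G →₀ ℂ) : ℝ := Real.sqrt ((Lam L c c).re)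

/-- Shift of coefficients. -/
noncomputable def Sh (h : G) (c : G →₀ ℂ) : G →₀ ℂ := Finsupp.mapDomain (h + ·) c

/-- Følner averaging operator on coefficients. -/
noncomputable def Av (F : ℕ → Finset G) (m : ℕ) (c : G →₀ ℂ) : G →₀ ℂ :=
  ((F m).card : ℂ)⁻¹ • ∑ h ∈ F m, Sh h c

lemma Tt_add (c d : G →₀ ℂ) (g : G) : Tt x (c + d) g = Tt x c g + Tt x d g := by
  simp [Tt]

lemma Tt_sub (c d : G →₀ ℂ) (g : G) : Tt x (c - d) g = Tt x c g - Tt x d g := by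
  simp [Tt]

lemma Tt_smul (r : ℂ) (c : G →₀ ℂ) (g : G) : Tt x (r • c) g = r • Tt x c g := by
  simp [Tt]

lemma Tt_sum {ι : Type*} (s : Finset ι) (f : ι → (G →₀ ℂ)) (g : G) :
    Tt x (∑ i ∈ s, f i) g = ∑ i ∈ s, Tt x (f i) g := by
  simp [Tt, map_sum]

lemma Tt_sh (h : G) (c : G →₀ ℂ) (g : G) : Tt x (Sh h c) g = Tt x c (g + h) := by
  rw [Tt, Sh, Finsupp.linearCombination_mapDomain]
  rw [Tt]
  have : ((fun a => x (g + a)) ∘ fun y => h + y) = fun a => x (g + h + a) := by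
    funext a
    simp only [Function.comp]
    rw [show g + (h + a) = g + h + a by abel]
  rw [this]

lemma Tt_single (a : G) (g : G) : Tt x (Finsupp.single a 1) g = x (g + a) := by
  simp [Tt, Finsupp.linearCombination_single]

lemma Tt_bound {C : ℝ} (hbdd : ∀ g, ‖x g‖ ≤ C) (c : G →₀ ℂ) (g : G) :
    ‖Tt x c g‖ ≤ (∑ a ∈ c.support, ‖c a‖) * C := by
  rw [Tt, Finsupp.linearCombination_apply, Finsupp.sum]
  calc ‖∑ a ∈ c.support, c a • x (g + a)‖ ≤ ∑ a ∈ c.support, ‖c a • x (g + a)‖ :=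
        norm_sum_le _ _
    _ ≤ ∑ a ∈ c.support, ‖c a‖ * C := by
        refine Finset.sum_le_sum fun a _ => ?_
        rw [norm_smul]
        exact mul_le_mul_of_nonneg_left (hbdd _) (norm_nonneg _)
    _ = (∑ a ∈ c.support, ‖c a‖) * C := by rw [Finset.sum_mul]

lemma nn_nonneg (c : G →₀ ℂ) : 0 ≤ Nn L c := Real.sqrt_nonneg _

/-- Level-`n` Cauchy–Schwarz. -/
lemma level_cs (s : Finset G) (u w : G → H) :
    ‖(s.card : ℂ)⁻¹ • ∑ g ∈ s, ⟪u g, w g⟫‖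
      ≤ Real.sqrt ((s.card : ℝ)⁻¹ * ∑ g ∈ s, ‖u g‖ ^ 2)
        * Real.sqrt ((s.card : ℝ)⁻¹ * ∑ g ∈ s, ‖w g‖ ^ 2) := by
  have h1 : ‖(s.card : ℂ)⁻¹ • ∑ g ∈ s, ⟪u g, w g⟫‖
      ≤ (s.card : ℝ)⁻¹ * ∑ g ∈ s, ‖u g‖ * ‖w g‖ := by
    rw [norm_smul, norm_inv, Complex.norm_natCast]
    refine mul_le_mul_of_nonneg_left ?_ (by positivity)
    exact (norm_sum_le _ _).trans (Finset.sum_le_sum fun g _ => norm_inner_le_norm _ _)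
  have h2 : ∑ g ∈ s, ‖u g‖ * ‖w g‖
      ≤ Real.sqrt (∑ g ∈ s, ‖u g‖ ^ 2) * Real.sqrt (∑ g ∈ s, ‖w g‖ ^ 2) := by
    have := Finset.sum_mul_sq_le_sq_mul_sq s (fun g => ‖u g‖) (fun g => ‖w g‖)
    have hnn : (0:ℝ) ≤ ∑ g ∈ s, ‖u g‖ * ‖w g‖ := by positivity
    calc ∑ g ∈ s, ‖u g‖ * ‖w g‖ = Real.sqrt ((∑ g ∈ s, ‖u g‖ * ‖w g‖) ^ 2) := by
          rw [Real.sqrt_sq hnn]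
      _ ≤ Real.sqrt ((∑ g ∈ s, ‖u g‖ ^ 2) * ∑ g ∈ s, ‖w g‖ ^ 2) := Real.sqrt_le_sqrt this
      _ = _ := Real.sqrt_mul (by positivity) _
  calc ‖(s.card : ℂ)⁻¹ • ∑ g ∈ s, ⟪u g, w g⟫‖
      ≤ (s.card : ℝ)⁻¹ * (Real.sqrt (∑ g ∈ s, ‖u g‖ ^ 2) * Real.sqrt (∑ g ∈ s, ‖w g‖ ^ 2)) :=
        h1.trans (mul_le_mul_of_nonneg_left h2 (by positivity))
    _ = _ := by
        rw [← Real.sqrt_mul (by positivity : (0:ℝ) ≤ ((s.card:ℝ))⁻¹ * ∑ g ∈ s, ‖u g‖ ^ 2),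
          show ((s.card:ℝ)⁻¹ * ∑ g ∈ s, ‖u g‖ ^ 2) * ((s.card:ℝ)⁻¹ * ∑ g ∈ s, ‖w g‖ ^ 2)
            = ((s.card:ℝ)⁻¹)^2 * ((∑ g ∈ s, ‖u g‖ ^ 2) * (∑ g ∈ s, ‖w g‖ ^ 2)) by ring,
          Real.sqrt_mul (sq_nonneg _), Real.sqrt_sq (by positivity),
          Real.sqrt_mul (by positivity)]


section main

variable {x : G → H} {L : G → ℂ} {C : ℝ}
variable (hF : IsFolner F) (hbdd : ∀ g, ‖x g‖ ≤ C)
variable (hL : ∀ h : G, Tendsto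
      (fun n => ((F n).card : ℂ)⁻¹ • ∑ g ∈ F n, (inner ℂ (x (g + h)) (x g) : ℂ))
      atTop (nhds (L h)))

include hF hbdd hL

lemma shift2 (a b : G) :
    Tendsto (fun n => ((F n).card : ℂ)⁻¹ • ∑ g ∈ F n, ⟪x (g + a), x (g + b)⟫)
      atTop (nhds (L (a - b))) := by
  have hC : (0:ℝ) ≤ C := le_trans (norm_nonneg _) (hbdd 0)
  have hb : ∀ g, ‖(⟪x (g + (a - b)), x g⟫ : ℂ)‖ ≤ C * C := fun g =>
    (norm_inner_le_norm _ _).trans (mul_le_mul (hbdd _) (hbdd _) (norm_nonneg _) hC)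
  have h1 := tendsto_avg_shift hF (fun g => (⟪x (g + (a - b)), x g⟫ : ℂ)) (C * C) hb b
    (hL (a - b))
  have h2 : ∀ n, ∑ g ∈ F n, (⟪x (g + b + (a - b)), x (g + b)⟫ : ℂ)
      = ∑ g ∈ F n, (⟪x (g + a), x (g + b)⟫ : ℂ) := fun n =>
    Finset.sum_congr rfl fun g _ => by rw [show g + b + (a - b) = g + a by abel]
  simpa only [h2] using h1

/-- MAIN: the average of `⟪Tt c g, Tt d g⟫` converges to `Lam c d`. -/
lemma tendsto_lam (c d : G →₀ ℂ) :
    Tendsto (fun n => ((F n).card : ℂ)⁻¹ • ∑ g ∈ F n, ⟪Tt x c g, Tt x d g⟫)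
      atTop (nhds (Lam L c d)) := by
  have hrw : ∀ n, ((F n).card : ℂ)⁻¹ • ∑ g ∈ F n, ⟪Tt x c g, Tt x d g⟫
      = ∑ a ∈ c.support, ∑ b ∈ d.support, (starRingEnd ℂ) (c a) * d b *
          (((F n).card : ℂ)⁻¹ • ∑ g ∈ F n, ⟪x (g + a), x (g + b)⟫) := by
    intro n
    have hpt : ∀ g, (⟪Tt x c g, Tt x d g⟫ : ℂ)
        = ∑ a ∈ c.support, ∑ b ∈ d.support,
            (starRingEnd ℂ) (c a) * d b * ⟪x (g + a), x (g + b)⟫ := by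
      intro g
      rw [Tt, Tt, Finsupp.linearCombination_apply, Finsupp.linearCombination_apply,
        Finsupp.sum, Finsupp.sum, sum_inner]
      refine Finset.sum_congr rfl fun a _ => ?_
      rw [inner_sum]
      refine Finset.sum_congr rfl fun b _ => ?_
      rw [inner_smul_left, inner_smul_right]
      ring
    simp only [hpt]
    rw [Finset.sum_comm' (t' := c.support) (s' := fun _ => F n)]
    · rw [Finset.smul_sum]
      refine Finset.sum_congr rfl fun a _ => ?_
      rw [Finset.sum_comm' (t' := d.support) (s' := fun _ => F n)]
      · rw [Finset.smul_sum]
        refine Finset.sum_congr rfl fun b _ => ?_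
        rw [← Finset.mul_sum, smul_eq_mul, smul_eq_mul]
        ring
      · intro i j; tauto
    · intro i j; tauto
  simp only [hrw]
  rw [show Lam L c d = ∑ a ∈ c.support, ∑ b ∈ d.support,
      (starRingEnd ℂ) (c a) * d b * L (a - b) from rfl]
  refine tendsto_finset_sum _ fun a _ => tendsto_finset_sum _ fun b _ => ?_
  exact (shift2 hF hbdd hL a b).const_mul _

/-- Real version of the main limit. -/
lemma tendsto_lam_re (c : G →₀ ℂ) :
    Tendsto (fun n => ((F n).card : ℝ)⁻¹ * ∑ g ∈ F n, ‖Tt x c g‖ ^ 2)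
      atTop (nhds ((Lam L c c).re)) := by
  have h := (Complex.continuous_re.tendsto _).comp (tendsto_lam hF hbdd hL c c)
  have hrw : ∀ n, (((F n).card : ℂ)⁻¹ • ∑ g ∈ F n, (⟪Tt x c g, Tt x c g⟫ : ℂ)).re
      = ((F n).card : ℝ)⁻¹ * ∑ g ∈ F n, ‖Tt x c g‖ ^ 2 := by
    intro n
    have : ∑ g ∈ F n, (⟪Tt x c g, Tt x c g⟫ : ℂ)
        = ((∑ g ∈ F n, ‖Tt x c g‖ ^ 2 : ℝ) : ℂ) := by
      push_cast
      exact Finset.sum_congr rfl fun g _ => inner_self_eq_norm_sq_to_K _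
    rw [this, smul_eq_mul]
    rw [show (((F n).card : ℂ))⁻¹ = (((((F n).card : ℝ))⁻¹ : ℝ) : ℂ) by push_cast; ring]
    rw [← Complex.ofReal_mul, Complex.ofReal_re]
  have h' : Tendsto (fun n => (((F n).card : ℂ)⁻¹ • ∑ g ∈ F n, (⟪Tt x c g, Tt x c g⟫ : ℂ)).re)
      atTop (nhds ((Lam L c c).re)) := h
  simpa only [hrw] using h'


lemma lam_self_re_nonneg (c : G →₀ ℂ) : 0 ≤ (Lam L c c).re := by
  refine ge_of_tendsto (tendsto_lam_re hF hbdd hL c) ?_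
  filter_upwards with n
  positivity

lemma nn_sq (c : G →₀ ℂ) : Nn L c ^ 2 = (Lam L c c).re :=
  Real.sq_sqrt (lam_self_re_nonneg hF hbdd hL c)

/-- Cauchy–Schwarz for `Lam`. -/
lemma norm_lam_le (c d : G →₀ ℂ) : ‖Lam L c d‖ ≤ Nn L c * Nn L d := by
  refine le_of_tendsto_of_tendsto' ((tendsto_lam hF hbdd hL c d).norm)
    (((tendsto_lam_re hF hbdd hL c).sqrt).mul ((tendsto_lam_re hF hbdd hL d).sqrt))
    fun n => level_cs (F n) _ _

lemma lam_add_left (c c' d : G →₀ ℂ) : Lam L (c + c') d = Lam L c d + Lam L c' d := by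
  refine tendsto_nhds_unique (tendsto_lam hF hbdd hL (c + c') d) ?_
  have h := (tendsto_lam hF hbdd hL c d).add (tendsto_lam hF hbdd hL c' d)
  have hrw : ∀ n, (((F n).card : ℂ)⁻¹ • ∑ g ∈ F n, (⟪Tt x c g, Tt x d g⟫ : ℂ))
        + ((F n).card : ℂ)⁻¹ • ∑ g ∈ F n, (⟪Tt x c' g, Tt x d g⟫ : ℂ)
      = ((F n).card : ℂ)⁻¹ • ∑ g ∈ F n, (⟪Tt x (c + c') g, Tt x d g⟫ : ℂ) := by
    intro n
    rw [← smul_add, ← Finset.sum_add_distrib]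
    congr 1
    refine Finset.sum_congr rfl fun g _ => ?_
    rw [Tt_add, inner_add_left]
  simpa only [hrw] using h

lemma lam_sub_left (c c' d : G →₀ ℂ) : Lam L (c - c') d = Lam L c d - Lam L c' d := by
  refine tendsto_nhds_unique (tendsto_lam hF hbdd hL (c - c') d) ?_
  have h := (tendsto_lam hF hbdd hL c d).sub (tendsto_lam hF hbdd hL c' d)
  have hrw : ∀ n, (((F n).card : ℂ)⁻¹ • ∑ g ∈ F n, (⟪Tt x c g, Tt x d g⟫ : ℂ))
        - ((F n).card : ℂ)⁻¹ • ∑ g ∈ F n, (⟪Tt x c' g, Tt x d g⟫ : ℂ)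
      = ((F n).card : ℂ)⁻¹ • ∑ g ∈ F n, (⟪Tt x (c - c') g, Tt x d g⟫ : ℂ) := by
    intro n
    rw [← smul_sub, ← Finset.sum_sub_distrib]
    congr 1
    refine Finset.sum_congr rfl fun g _ => ?_
    rw [Tt_sub, inner_sub_left]
  simpa only [hrw] using h

lemma lam_smul_left (r : ℂ) (c d : G →₀ ℂ) :
    Lam L (r • c) d = (starRingEnd ℂ) r * Lam L c d := by
  refine tendsto_nhds_unique (tendsto_lam hF hbdd hL (r • c) d) ?_
  have h := (tendsto_lam hF hbdd hL c d).const_mul ((starRingEnd ℂ) r)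
  have hrw : ∀ n, (starRingEnd ℂ) r * (((F n).card : ℂ)⁻¹ • ∑ g ∈ F n, (⟪Tt x c g, Tt x d g⟫ : ℂ))
      = ((F n).card : ℂ)⁻¹ • ∑ g ∈ F n, (⟪Tt x (r • c) g, Tt x d g⟫ : ℂ) := by
    intro n
    simp only [Tt_smul, inner_smul_left, smul_eq_mul, ← Finset.mul_sum]
    ring
  simpa only [hrw] using h


lemma lam_conj (c d : G →₀ ℂ) : Lam L d c = (starRingEnd ℂ) (Lam L c d) := by
  refine tendsto_nhds_unique (tendsto_lam hF hbdd hL d c) ?_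
  have h := (Complex.continuous_conj.tendsto _).comp (tendsto_lam hF hbdd hL c d)
  have hrw : ∀ n, (starRingEnd ℂ) (((F n).card : ℂ)⁻¹ • ∑ g ∈ F n, (⟪Tt x c g, Tt x d g⟫ : ℂ))
      = ((F n).card : ℂ)⁻¹ • ∑ g ∈ F n, (⟪Tt x d g, Tt x c g⟫ : ℂ) := by
    intro n
    rw [smul_eq_mul, smul_eq_mul, map_mul, map_inv₀, map_natCast, map_sum]
    congr 1
    exact Finset.sum_congr rfl fun g _ => inner_conj_symm _ _
  have h' : Tendsto (fun n => (starRingEnd ℂ) (((F n).card : ℂ)⁻¹ • ∑ g ∈ F n, (⟪Tt x c g, Tt x d g⟫ : ℂ)))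
      atTop (nhds ((starRingEnd ℂ) (Lam L c d))) := h
  simpa only [hrw] using h'

lemma lam_zero_right (c : G →₀ ℂ) : Lam L c 0 = 0 := by
  simp [Lam]

lemma lam_zero_left (c : G →₀ ℂ) : Lam L 0 c = 0 := by
  simp [Lam]

lemma lam_add_right (c d d' : G →₀ ℂ) : Lam L c (d + d') = Lam L c d + Lam L c d' := by
  rw [lam_conj hF hbdd hL (d + d') c, lam_add_left hF hbdd hL, map_add,
    ← lam_conj hF hbdd hL d c, ← lam_conj hF hbdd hL d' c]

lemma lam_sub_right (c d d' : G →₀ ℂ) : Lam L c (d - d') = Lam L c d - Lam L c d' := by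
  rw [lam_conj hF hbdd hL (d - d') c, lam_sub_left hF hbdd hL, map_sub,
    ← lam_conj hF hbdd hL d c, ← lam_conj hF hbdd hL d' c]

lemma lam_smul_right (r : ℂ) (c d : G →₀ ℂ) : Lam L c (r • d) = r * Lam L c d := by
  rw [lam_conj hF hbdd hL (r • d) c, lam_smul_left hF hbdd hL, map_mul,
    Complex.conj_conj, ← lam_conj hF hbdd hL d c]

lemma lam_sum_right {ι : Type*} (c : G →₀ ℂ) (s : Finset ι) (f : ι → (G →₀ ℂ)) :
    Lam L c (∑ i ∈ s, f i) = ∑ i ∈ s, Lam L c (f i) := by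
  classical
  induction s using Finset.cons_induction with
  | empty => simpa using lam_zero_right hF hbdd hL c
  | cons a s ha ih =>
      rw [Finset.sum_cons, lam_add_right hF hbdd hL, ih, Finset.sum_cons]

lemma lam_sum_left {ι : Type*} (c : G →₀ ℂ) (s : Finset ι) (f : ι → (G →₀ ℂ)) :
    Lam L (∑ i ∈ s, f i) c = ∑ i ∈ s, Lam L (f i) c := by
  classical
  induction s using Finset.cons_induction with
  | empty => simpa using lam_zero_left hF hbdd hL c
  | cons a s ha ih =>
      rw [Finset.sum_cons, lam_add_left hF hbdd hL, ih, Finset.sum_cons]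

lemma lam_sh (h : G) (c d : G →₀ ℂ) : Lam L (Sh h c) (Sh h d) = Lam L c d := by
  refine tendsto_nhds_unique (tendsto_lam hF hbdd hL _ _) ?_
  have hC : (0:ℝ) ≤ C := le_trans (norm_nonneg _) (hbdd 0)
  have hb : ∀ g, ‖(⟪Tt x c g, Tt x d g⟫ : ℂ)‖
      ≤ ((∑ a ∈ c.support, ‖c a‖) * C) * ((∑ a ∈ d.support, ‖d a‖) * C) := fun g =>
    (norm_inner_le_norm _ _).trans
      (mul_le_mul (Tt_bound x hbdd c g) (Tt_bound x hbdd d g) (norm_nonneg _)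
        (by positivity))
  have h1 := tendsto_avg_shift hF (fun g => (⟪Tt x c g, Tt x d g⟫ : ℂ)) _ hb h
    (tendsto_lam hF hbdd hL c d)
  simpa only [Tt_sh] using h1

end main

lemma sh_add (h : G) (c d : G →₀ ℂ) : Sh h (c + d) = Sh h c + Sh h d := by
  simp [Sh, Finsupp.mapDomain_add]

lemma sh_smul (h : G) (r : ℂ) (c : G →₀ ℂ) : Sh h (r • c) = r • Sh h c := by
  simp [Sh, Finsupp.mapDomain_smul]

lemma sh_sum {ι : Type*} (h : G) (s : Finset ι) (f : ι → (G →₀ ℂ)) :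
    Sh h (∑ i ∈ s, f i) = ∑ i ∈ s, Sh h (f i) :=
  map_sum (Finsupp.mapDomain.addMonoidHom (h + ·)) f s

lemma sh_sh (h h' : G) (c : G →₀ ℂ) : Sh h (Sh h' c) = Sh (h + h') c := by
  rw [Sh, Sh, Sh, ← Finsupp.mapDomain_comp]
  congr 1
  funext a
  simp [Function.comp, add_assoc]

lemma sh_zero (c : G →₀ ℂ) : Sh (0 : G) c = c := by
  rw [Sh, show ((0 : G) + ·) = id from funext zero_add, Finsupp.mapDomain_id]

lemma sh_single (h a : G) : Sh h (Finsupp.single a (1:ℂ)) = Finsupp.single (h + a) 1 :=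
  Finsupp.mapDomain_single

lemma av_av (m k : ℕ) (c : G →₀ ℂ) :
    Av F m (Av F k c) = ((F m).card : ℂ)⁻¹ • ((F k).card : ℂ)⁻¹ •
      ∑ h ∈ F m, ∑ h' ∈ F k, Sh (h + h') c := by
  simp only [Av, sh_smul, sh_sum, sh_sh, ← Finset.smul_sum]

lemma av_comm (m k : ℕ) (c : G →₀ ℂ) : Av F m (Av F k c) = Av F k (Av F m c) := by
  rw [av_av, av_av, smul_comm]
  congr 1
  congr 1
  rw [Finset.sum_comm]
  refine Finset.sum_congr rfl fun h _ => Finset.sum_congr rfl fun h' _ => ?_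
  rw [add_comm]

lemma av_add (m : ℕ) (c d : G →₀ ℂ) : Av F m (c + d) = Av F m c + Av F m d := by
  simp [Av, sh_add, Finset.sum_add_distrib, smul_add]

lemma av_smul (m : ℕ) (r : ℂ) (c : G →₀ ℂ) : Av F m (r • c) = r • Av F m c := by
  simp only [Av, sh_smul, ← Finset.smul_sum]
  rw [smul_comm]


/-- The coefficient vector of `x` itself. -/
noncomputable def vxi : G →₀ ℂ := Finsupp.single (0 : G) 1

lemma sh_vxi (h : G) : Sh h (vxi : G →₀ ℂ) = Finsupp.single h 1 := by
  rw [vxi, sh_single, add_zero]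

lemma Tt_vxi (g : G) : Tt x (vxi : G →₀ ℂ) g = x g := by
  rw [vxi, Tt_single, add_zero]

section main2

variable {x : G → H} {L : G → ℂ} {C : ℝ}
variable (hF : IsFolner F) (hbdd : ∀ g, ‖x g‖ ≤ C)
variable (hL : ∀ h : G, Tendsto
      (fun n => ((F n).card : ℂ)⁻¹ • ∑ g ∈ F n, (inner ℂ (x (g + h)) (x g) : ℂ))
      atTop (nhds (L h)))

lemma nn_zero : Nn L (0 : G →₀ ℂ) = 0 := by
  simp [Nn, Lam]

include hF hbdd hL

lemma nn_smul (r : ℂ) (c : G →₀ ℂ) : Nn L (r • c) = ‖r‖ * Nn L c := by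
  rw [Nn, Nn, lam_smul_left hF hbdd hL, lam_smul_right hF hbdd hL, ← mul_assoc,
    Complex.conj_mul', ← Complex.ofReal_pow, Complex.re_ofReal_mul,
    Real.sqrt_mul (sq_nonneg _), Real.sqrt_sq (norm_nonneg _)]

lemma nn_neg (c : G →₀ ℂ) : Nn L (-c) = Nn L c := by
  have h : -c = (-1 : ℂ) • c := (neg_one_smul ℂ c).symm
  rw [h, nn_smul hF hbdd hL]
  simp

lemma nn_add_le (c d : G →₀ ℂ) : Nn L (c + d) ≤ Nn L c + Nn L d := by
  have h2 : (Lam L c d).re ≤ Nn L c * Nn L d := by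
    refine (Complex.re_le_norm _).trans ?_
    exact norm_lam_le hF hbdd hL c d
  have hre : (Lam L (c + d) (c + d)).re ≤ (Nn L c + Nn L d) ^ 2 := by
    rw [lam_add_left hF hbdd hL, lam_add_right hF hbdd hL, lam_add_right hF hbdd hL,
      lam_conj hF hbdd hL c d]
    simp only [Complex.add_re, Complex.conj_re]
    have e1 := nn_sq hF hbdd hL (L := L) c
    have e2 := nn_sq hF hbdd hL (L := L) d
    nlinarith [nn_nonneg (L := L) c, nn_nonneg (L := L) d]
  calc Nn L (c + d) ≤ Real.sqrt ((Nn L c + Nn L d) ^ 2) := Real.sqrt_le_sqrt hre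
    _ = Nn L c + Nn L d :=
        Real.sqrt_sq (add_nonneg (nn_nonneg (L := L) c) (nn_nonneg (L := L) d))

lemma nn_sub_le (c d : G →₀ ℂ) : Nn L (c - d) ≤ Nn L c + Nn L d := by
  rw [sub_eq_add_neg]
  exact (nn_add_le hF hbdd hL c (-d)).trans (by rw [nn_neg hF hbdd hL])

lemma nn_le_add (a b : G →₀ ℂ) : Nn L a ≤ Nn L b + Nn L (a - b) := by
  have h : b + (a - b) = a := by abel
  calc Nn L a = Nn L (b + (a - b)) := by rw [h]
    _ ≤ _ := nn_add_le hF hbdd hL _ _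

lemma nn_sum_le {ι : Type*} (s : Finset ι) (f : ι → (G →₀ ℂ)) :
    Nn L (∑ i ∈ s, f i) ≤ ∑ i ∈ s, Nn L (f i) := by
  classical
  induction s using Finset.cons_induction with
  | empty => simpa using le_of_eq (nn_zero (L := L))
  | cons a s ha ih =>
      rw [Finset.sum_cons, Finset.sum_cons]
      exact (nn_add_le hF hbdd hL _ _).trans (add_le_add le_rfl ih)

lemma nn_sh (h : G) (c : G →₀ ℂ) : Nn L (Sh h c) = Nn L c := by
  rw [Nn, Nn, lam_sh hF hbdd hL]

lemma nn_vxi_le : Nn L (vxi : G →₀ ℂ) ≤ C := by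
  have hC : (0:ℝ) ≤ C := le_trans (norm_nonneg _) (hbdd 0)
  have hre : (Lam L (vxi : G →₀ ℂ) vxi).re ≤ C ^ 2 := by
    refine le_of_tendsto (tendsto_lam_re hF hbdd hL vxi) ?_
    filter_upwards with n
    have hcard : (0:ℝ) < (F n).card := by
      exact_mod_cast Finset.card_pos.mpr (hF.1 n)
    have hsum : ∑ g ∈ F n, ‖Tt x (vxi : G →₀ ℂ) g‖ ^ 2 ≤ ((F n).card : ℝ) * C ^ 2 := by
      calc ∑ g ∈ F n, ‖Tt x (vxi : G →₀ ℂ) g‖ ^ 2 ≤ ∑ _g ∈ F n, C ^ 2 := by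
            refine Finset.sum_le_sum fun g _ => ?_
            rw [Tt_vxi]
            exact pow_le_pow_left₀ (norm_nonneg _) (hbdd g) 2
        _ = ((F n).card : ℝ) * C ^ 2 := by simp [mul_comm]
    calc ((F n).card : ℝ)⁻¹ * ∑ g ∈ F n, ‖Tt x (vxi : G →₀ ℂ) g‖ ^ 2
        ≤ ((F n).card : ℝ)⁻¹ * (((F n).card : ℝ) * C ^ 2) :=
          mul_le_mul_of_nonneg_left hsum (by positivity)
      _ = C ^ 2 := by field_simp
  calc Nn L (vxi : G →₀ ℂ) ≤ Real.sqrt (C ^ 2) := Real.sqrt_le_sqrt hre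
    _ = C := Real.sqrt_sq hC

lemma nn_single_le (a : G) : Nn L (Finsupp.single a (1:ℂ)) ≤ C := by
  rw [← sh_vxi, nn_sh hF hbdd hL]
  exact nn_vxi_le hF hbdd hL

lemma lam_sh_vxi (h : G) : Lam L (Sh h (vxi : G →₀ ℂ)) vxi = L h := by
  refine tendsto_nhds_unique (tendsto_lam hF hbdd hL _ _) ?_
  have hrw : ∀ n, ∑ g ∈ F n, (⟪Tt x (Sh h (vxi : G →₀ ℂ)) g, Tt x (vxi : G →₀ ℂ) g⟫ : ℂ)
      = ∑ g ∈ F n, (⟪x (g + h), x g⟫ : ℂ) := by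
    intro n
    refine Finset.sum_congr rfl fun g _ => ?_
    rw [Tt_sh, Tt_vxi, Tt_vxi]
  simpa only [hrw] using hL h


omit hF hbdd hL in
lemma Tt_av (m : ℕ) (c : G →₀ ℂ) (g : G) :
    Tt x (Av F m c) g = ((F m).card : ℂ)⁻¹ • ∑ h ∈ F m, Tt x (Sh h c) g := by
  rw [Av, Tt_smul, Tt_sum]

/-- Contraction property of the averaging operator. -/
lemma nn_av_le (m : ℕ) (c : G →₀ ℂ) : Nn L (Av F m c) ≤ Nn L c := by
  have hm : (0:ℝ) < ((F m).card : ℝ) := by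
    exact_mod_cast Finset.card_pos.mpr (hF.1 m)
  have hlev : ∀ n, ((F n).card : ℝ)⁻¹ * ∑ g ∈ F n, ‖Tt x (Av F m c) g‖ ^ 2
      ≤ ((F m).card : ℝ)⁻¹ * ∑ h ∈ F m,
          (((F n).card : ℝ)⁻¹ * ∑ g ∈ F n, ‖Tt x (Sh h c) g‖ ^ 2) := by
    intro n
    have hpt : ∀ g, ‖Tt x (Av F m c) g‖ ^ 2
        ≤ ((F m).card : ℝ)⁻¹ * ∑ h ∈ F m, ‖Tt x (Sh h c) g‖ ^ 2 := by
      intro g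
      rw [Tt_av]
      have h1 : ‖((F m).card : ℂ)⁻¹ • ∑ h ∈ F m, Tt x (Sh h c) g‖
          ≤ ((F m).card : ℝ)⁻¹ * ∑ h ∈ F m, ‖Tt x (Sh h c) g‖ := by
        rw [norm_smul, norm_inv, Complex.norm_natCast]
        exact mul_le_mul_of_nonneg_left (norm_sum_le _ _) (by positivity)
      have h2 : (∑ h ∈ F m, ‖Tt x (Sh h c) g‖) ^ 2
          ≤ ((F m).card : ℝ) * ∑ h ∈ F m, ‖Tt x (Sh h c) g‖ ^ 2 :=
        sq_sum_le_card_mul_sum_sq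
      calc ‖((F m).card : ℂ)⁻¹ • ∑ h ∈ F m, Tt x (Sh h c) g‖ ^ 2
          ≤ (((F m).card : ℝ)⁻¹ * ∑ h ∈ F m, ‖Tt x (Sh h c) g‖) ^ 2 := by
            refine pow_le_pow_left₀ (norm_nonneg _) h1 2
        _ = (((F m).card : ℝ)⁻¹) ^ 2 * (∑ h ∈ F m, ‖Tt x (Sh h c) g‖) ^ 2 := by ring
        _ ≤ (((F m).card : ℝ)⁻¹) ^ 2 * (((F m).card : ℝ) * ∑ h ∈ F m, ‖Tt x (Sh h c) g‖ ^ 2) :=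
            mul_le_mul_of_nonneg_left h2 (by positivity)
        _ = ((F m).card : ℝ)⁻¹ * ∑ h ∈ F m, ‖Tt x (Sh h c) g‖ ^ 2 := by
            field_simp
    calc ((F n).card : ℝ)⁻¹ * ∑ g ∈ F n, ‖Tt x (Av F m c) g‖ ^ 2
        ≤ ((F n).card : ℝ)⁻¹ * ∑ g ∈ F n,
            (((F m).card : ℝ)⁻¹ * ∑ h ∈ F m, ‖Tt x (Sh h c) g‖ ^ 2) :=
          mul_le_mul_of_nonneg_left (Finset.sum_le_sum fun g _ => hpt g) (by positivity)
      _ = ((F m).card : ℝ)⁻¹ * ∑ h ∈ F m,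
            (((F n).card : ℝ)⁻¹ * ∑ g ∈ F n, ‖Tt x (Sh h c) g‖ ^ 2) := by
          simp only [Finset.mul_sum]
          rw [Finset.sum_comm]
          exact Finset.sum_congr rfl fun h _ => Finset.sum_congr rfl fun g _ => by ring
  have h1 := tendsto_lam_re hF hbdd hL (Av F m c)
  have hterm : ∀ h', Tendsto (fun n => ((F n).card : ℝ)⁻¹ * ∑ g ∈ F n, ‖Tt x (Sh h' c) g‖ ^ 2)
      atTop (nhds ((Lam L c c).re)) := fun h' => by
    have := tendsto_lam_re hF hbdd hL (Sh h' c)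
    rwa [lam_sh hF hbdd hL] at this
  have hsum := tendsto_finset_sum (F m) (fun h' (_ : h' ∈ F m) => hterm h')
  have h2 := hsum.const_mul (((F m).card : ℝ)⁻¹)
  have hval : ((F m).card : ℝ)⁻¹ * ∑ _h ∈ F m, (Lam L c c).re = (Lam L c c).re := by
    rw [Finset.sum_const, nsmul_eq_mul, ← mul_assoc, inv_mul_cancel₀ (ne_of_gt hm), one_mul]
  rw [Nn, Nn]
  refine Real.sqrt_le_sqrt (le_of_tendsto_of_tendsto' h1 ?_ hlev)
  rw [← hval]
  exact h2


omit hF hbdd hL in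
lemma sh_av_vxi_sub (k : ℕ) (h : G) :
    Sh h (Av F k (vxi : G →₀ ℂ)) - Av F k vxi
      = ((F k).card : ℂ)⁻¹ • ((∑ a ∈ (F k).image (h + ·), Finsupp.single a (1:ℂ))
          - ∑ a ∈ F k, Finsupp.single a (1:ℂ)) := by
  rw [Av, sh_smul, sh_sum, smul_sub]
  congr 2
  · rw [Finset.sum_image (fun a _ b _ hab => add_left_cancel hab)]
    exact Finset.sum_congr rfl fun h' _ => by rw [sh_sh, sh_vxi]
  · exact Finset.sum_congr rfl fun h' _ => sh_vxi h'

lemma nn_sh_av_sub (k : ℕ) (h : G) :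
    Nn L (Sh h (Av F k (vxi : G →₀ ℂ)) - Av F k vxi)
      ≤ ((symmDiff (F k) ((F k).image (h + ·))).card : ℝ) / (F k).card * C := by
  classical
  have hC : (0:ℝ) ≤ C := le_trans (norm_nonneg _) (hbdd 0)
  set A := (F k).image (h + ·) with hA
  have hsingle : ∀ (t : Finset G),
      Nn L (∑ a ∈ t, Finsupp.single a (1:ℂ)) ≤ (t.card : ℝ) * C := by
    intro t
    calc Nn L (∑ a ∈ t, Finsupp.single a (1:ℂ)) ≤ ∑ a ∈ t, Nn L (Finsupp.single a (1:ℂ)) :=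
          nn_sum_le hF hbdd hL t _
      _ ≤ ∑ _a ∈ t, C := Finset.sum_le_sum fun a _ => nn_single_le hF hbdd hL a
      _ = (t.card : ℝ) * C := by simp [mul_comm]
  have hd : (∑ a ∈ A, Finsupp.single a (1:ℂ)) - ∑ a ∈ F k, Finsupp.single a (1:ℂ)
      = (∑ a ∈ A \ F k, Finsupp.single a (1:ℂ)) - ∑ a ∈ F k \ A, Finsupp.single a (1:ℂ) :=
    (Finset.sum_sdiff_sub_sum_sdiff).symm
  rw [sh_av_vxi_sub, nn_smul hF hbdd hL, norm_inv, Complex.norm_natCast, hd]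
  have h1 : Nn L ((∑ a ∈ A \ F k, Finsupp.single a (1:ℂ))
        - ∑ a ∈ F k \ A, Finsupp.single a (1:ℂ))
      ≤ ((A \ F k).card : ℝ) * C + ((F k \ A).card : ℝ) * C :=
    (nn_sub_le hF hbdd hL _ _).trans (add_le_add (hsingle _) (hsingle _))
  have hcard : ((symmDiff (F k) A).card : ℝ) = ((F k \ A).card : ℝ) + ((A \ F k).card : ℝ) := by
    rw [symmDiff_def, Finset.sup_eq_union, Finset.card_union_of_disjoint disjoint_sdiff_sdiff]
    push_cast
    ring
  calc ((F k).card : ℝ)⁻¹ * Nn L ((∑ a ∈ A \ F k, Finsupp.single a (1:ℂ))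
        - ∑ a ∈ F k \ A, Finsupp.single a (1:ℂ))
      ≤ ((F k).card : ℝ)⁻¹ * (((A \ F k).card : ℝ) * C + ((F k \ A).card : ℝ) * C) :=
        mul_le_mul_of_nonneg_left h1 (by positivity)
    _ = ((symmDiff (F k) A).card : ℝ) / (F k).card * C := by
        rw [hcard]; ring

lemma nn_av_av_sub (m k : ℕ) :
    Nn L (Av F m (Av F k (vxi : G →₀ ℂ)) - Av F k vxi)
      ≤ ((F m).card : ℝ)⁻¹ * ∑ h ∈ F m,
          (((symmDiff (F k) ((F k).image (h + ·))).card : ℝ) / (F k).card * C) := by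
  have hm0 : ((F m).card : ℂ) ≠ 0 := by
    exact_mod_cast (Finset.card_pos.mpr (hF.1 m)).ne'
  have hexp : Av F m (Av F k (vxi : G →₀ ℂ)) - Av F k vxi
      = ((F m).card : ℂ)⁻¹ • ∑ h ∈ F m, (Sh h (Av F k vxi) - Av F k vxi) := by
    rw [Finset.sum_sub_distrib, smul_sub, Av]
    congr 1
    rw [Finset.sum_const]
    have : ((F m).card • (Av F k (vxi : G →₀ ℂ))) = ((F m).card : ℂ) • Av F k vxi :=
      (Nat.cast_smul_eq_nsmul ℂ _ _).symm
    rw [this, smul_smul, inv_mul_cancel₀ hm0, one_smul]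
  rw [hexp, nn_smul hF hbdd hL, norm_inv, Complex.norm_natCast]
  exact mul_le_mul_of_nonneg_left
    ((nn_sum_le hF hbdd hL _ _).trans
      (Finset.sum_le_sum fun h _ => nn_sh_av_sub hF hbdd hL k h)) (by positivity)

omit hbdd hL in
lemma eta_tendsto {C : ℝ} (m : ℕ) : Tendsto (fun k => ((F m).card : ℝ)⁻¹ * ∑ h ∈ F m,
    (((symmDiff (F k) ((F k).image (h + ·))).card : ℝ) / (F k).card * C)) atTop (nhds 0) := by
  have h1 := tendsto_finset_sum (F m)
    (fun h (_ : h ∈ F m) => (hF.2 h).mul_const C)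
  have h2 := h1.const_mul (((F m).card : ℝ)⁻¹)
  simpa using h2

lemma tendsto_lam_av_vxi
    (hLavg : Tendsto (fun k => ((F k).card : ℂ)⁻¹ • ∑ h ∈ F k, L h) atTop (nhds 0)) :
    Tendsto (fun k => Lam L (Av F k (vxi : G →₀ ℂ)) vxi) atTop (nhds 0) := by
  have heq : ∀ k, Lam L (Av F k (vxi : G →₀ ℂ)) vxi = ((F k).card : ℂ)⁻¹ • ∑ h ∈ F k, L h := by
    intro k
    rw [Av, lam_smul_left hF hbdd hL, lam_sum_left hF hbdd hL, map_inv₀, map_natCast,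
      smul_eq_mul]
    congr 1
    exact Finset.sum_congr rfl fun h _ => lam_sh_vxi hF hbdd hL h
  simpa only [heq] using hLavg

lemma tendsto_lam_av_av
    (hLavg : Tendsto (fun k => ((F k).card : ℂ)⁻¹ • ∑ h ∈ F k, L h) atTop (nhds 0))
    (m : ℕ) :
    Tendsto (fun k => Lam L (Av F k (vxi : G →₀ ℂ)) (Av F m vxi)) atTop (nhds 0) := by
  have hC : (0:ℝ) ≤ C := le_trans (norm_nonneg _) (hbdd 0)
  have hm0 : ((F m).card : ℂ) ≠ 0 := by
    exact_mod_cast (Finset.card_pos.mpr (hF.1 m)).ne'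
  have heq : ∀ k, Lam L (Av F k (vxi : G →₀ ℂ)) (Av F m vxi)
      = Lam L (Av F k vxi) vxi + ((F m).card : ℂ)⁻¹ *
          ∑ h ∈ F m, Lam L (Sh (-h) (Av F k vxi) - Av F k vxi) vxi := by
    intro k
    have hterm : ∀ h, Lam L (Av F k (vxi : G →₀ ℂ)) (Sh h vxi)
        = Lam L (Av F k vxi) vxi + Lam L (Sh (-h) (Av F k vxi) - Av F k vxi) vxi := by
      intro h
      have e1 : Lam L (Sh (-h) (Av F k (vxi : G →₀ ℂ))) vxi
          = Lam L (Av F k vxi) (Sh h vxi) := by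
        have := lam_sh hF hbdd hL (-h) (Av F k (vxi : G →₀ ℂ)) (Sh h vxi)
        rwa [sh_sh, neg_add_cancel, sh_zero] at this
      have e2 := lam_sub_left hF hbdd hL (Sh (-h) (Av F k (vxi : G →₀ ℂ))) (Av F k vxi) vxi
      rw [e2, e1]
      ring
    rw [show Av F m (vxi : G →₀ ℂ) = ((F m).card : ℂ)⁻¹ • ∑ h ∈ F m, Sh h vxi from rfl,
      lam_smul_right hF hbdd hL, lam_sum_right hF hbdd hL]
    rw [Finset.sum_congr rfl fun h _ => hterm h, Finset.sum_add_distrib, Finset.sum_const,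
      nsmul_eq_mul, mul_add, ← mul_assoc, inv_mul_cancel₀ hm0, one_mul]
  have herr : Tendsto (fun k => ((F m).card : ℂ)⁻¹ *
      ∑ h ∈ F m, Lam L (Sh (-h) (Av F k (vxi : G →₀ ℂ)) - Av F k vxi) vxi) atTop (nhds 0) := by
    have hterm0 : ∀ h : G, Tendsto
        (fun k => Lam L (Sh (-h) (Av F k (vxi : G →₀ ℂ)) - Av F k vxi) vxi) atTop (nhds 0) := by
      intro h
      refine squeeze_zero_norm (fun k => ?_) (by simpa only [zero_mul] using ((hF.2 (-h)).mul_const C).mul_const C)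
      calc ‖Lam L (Sh (-h) (Av F k (vxi : G →₀ ℂ)) - Av F k vxi) vxi‖
          ≤ Nn L (Sh (-h) (Av F k (vxi : G →₀ ℂ)) - Av F k vxi) * Nn L (vxi : G →₀ ℂ) :=
            norm_lam_le hF hbdd hL _ _
        _ ≤ (((symmDiff (F k) ((F k).image ((-h) + ·))).card : ℝ) / (F k).card * C) * C := by
            refine mul_le_mul (nn_sh_av_sub hF hbdd hL k (-h)) (nn_vxi_le hF hbdd hL)
              (nn_nonneg _ _) (by positivity)
    have h1 := tendsto_finset_sum (F m) (fun h (_ : h ∈ F m) => hterm0 h)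
    have h2 := h1.const_mul (((F m).card : ℂ)⁻¹)
    simpa using h2
  have := (tendsto_lam_av_vxi hF hbdd hL hLavg).add herr
  rw [add_zero] at this
  simpa only [← heq] using this


lemma tendsto_avg_diff (k : ℕ) :
    Tendsto (fun n => ((((F n).card : ℂ)⁻¹ • ∑ g ∈ F n, x g)
      - ((F n).card : ℂ)⁻¹ • ∑ g ∈ F n, Tt x (Av F k (vxi : G →₀ ℂ)) g)) atTop (nhds 0) := by
  have hk0 : ((F k).card : ℂ) ≠ 0 := by
    exact_mod_cast (Finset.card_pos.mpr (hF.1 k)).ne'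
  have heq : ∀ n, ((((F n).card : ℂ)⁻¹ • ∑ g ∈ F n, x g)
      - ((F n).card : ℂ)⁻¹ • ∑ g ∈ F n, Tt x (Av F k (vxi : G →₀ ℂ)) g)
      = ((F k).card : ℂ)⁻¹ • ∑ h ∈ F k,
          ((((F n).card : ℂ)⁻¹ • ∑ g ∈ F n, x g)
            - ((F n).card : ℂ)⁻¹ • ∑ g ∈ F n, x (g + h)) := by
    intro n
    have e1 : ∀ g, Tt x (Av F k (vxi : G →₀ ℂ)) g = ((F k).card : ℂ)⁻¹ • ∑ h ∈ F k, x (g + h) := by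
      intro g
      rw [Tt_av]
      congr 1
      exact Finset.sum_congr rfl fun h _ => by rw [Tt_sh, Tt_vxi]
    simp only [e1]
    rw [Finset.sum_sub_distrib, smul_sub]
    have e2 : ((F k).card : ℂ)⁻¹ • ∑ _h ∈ F k, (((F n).card : ℂ)⁻¹ • ∑ g ∈ F n, x g)
        = ((F n).card : ℂ)⁻¹ • ∑ g ∈ F n, x g := by
      rw [Finset.sum_const, ← Nat.cast_smul_eq_nsmul ℂ, smul_smul, inv_mul_cancel₀ hk0,
        one_smul]
    rw [e2]
    congr 1
    calc ((F n).card : ℂ)⁻¹ • ∑ g ∈ F n, ((F k).card : ℂ)⁻¹ • ∑ h ∈ F k, x (g + h)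
        = ((F n).card : ℂ)⁻¹ • ((F k).card : ℂ)⁻¹ • ∑ g ∈ F n, ∑ h ∈ F k, x (g + h) := by
          rw [← Finset.smul_sum]
      _ = ((F k).card : ℂ)⁻¹ • ((F n).card : ℂ)⁻¹ • ∑ h ∈ F k, ∑ g ∈ F n, x (g + h) := by
          rw [smul_comm, Finset.sum_comm]
      _ = ((F k).card : ℂ)⁻¹ • ∑ h ∈ F k, ((F n).card : ℂ)⁻¹ • ∑ g ∈ F n, x (g + h) := by
          rw [Finset.smul_sum]
  have hterm : ∀ h : G, Tendsto (fun n => (((F n).card : ℂ)⁻¹ • ∑ g ∈ F n, x g)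
      - ((F n).card : ℂ)⁻¹ • ∑ g ∈ F n, x (g + h)) atTop (nhds 0) := by
    intro h
    have := (folner_compare hF x C hbdd h).neg
    simp only [neg_sub, neg_zero] at this
    exact this
  have h1 := tendsto_finset_sum (F k) (fun h (_ : h ∈ F k) => hterm h)
  have h2 := h1.const_smul (((F k).card : ℂ)⁻¹)
  simp only [Finset.sum_const, smul_zero] at h2
  simp only [heq]
  exact h2

omit hF hbdd hL in
lemma avg_norm_le_sqrt (s : Finset G) (u : G → H) :
    ‖(s.card : ℂ)⁻¹ • ∑ g ∈ s, u g‖ ≤ Real.sqrt ((s.card : ℝ)⁻¹ * ∑ g ∈ s, ‖u g‖ ^ 2) := by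
  rcases s.eq_empty_or_nonempty with hs | hs
  · simp [hs]
  have hc : (0:ℝ) < (s.card : ℝ) := by exact_mod_cast Finset.card_pos.mpr hs
  have h1 : ‖(s.card : ℂ)⁻¹ • ∑ g ∈ s, u g‖ ≤ (s.card : ℝ)⁻¹ * ∑ g ∈ s, ‖u g‖ := by
    rw [norm_smul, norm_inv, Complex.norm_natCast]
    exact mul_le_mul_of_nonneg_left (norm_sum_le _ _) (by positivity)
  have h2 : ((s.card : ℝ)⁻¹ * ∑ g ∈ s, ‖u g‖) ^ 2 ≤ (s.card : ℝ)⁻¹ * ∑ g ∈ s, ‖u g‖ ^ 2 := by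
    have h3 : (∑ g ∈ s, ‖u g‖) ^ 2 ≤ (s.card : ℝ) * ∑ g ∈ s, ‖u g‖ ^ 2 :=
      sq_sum_le_card_mul_sum_sq
    calc ((s.card : ℝ)⁻¹ * ∑ g ∈ s, ‖u g‖) ^ 2
        = ((s.card : ℝ)⁻¹) ^ 2 * (∑ g ∈ s, ‖u g‖) ^ 2 := by ring
      _ ≤ ((s.card : ℝ)⁻¹) ^ 2 * ((s.card : ℝ) * ∑ g ∈ s, ‖u g‖ ^ 2) :=
          mul_le_mul_of_nonneg_left h3 (by positivity)
      _ = (s.card : ℝ)⁻¹ * ∑ g ∈ s, ‖u g‖ ^ 2 := by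
          field_simp
  calc ‖(s.card : ℂ)⁻¹ • ∑ g ∈ s, u g‖ ≤ (s.card : ℝ)⁻¹ * ∑ g ∈ s, ‖u g‖ := h1
    _ = Real.sqrt (((s.card : ℝ)⁻¹ * ∑ g ∈ s, ‖u g‖) ^ 2) :=
        (Real.sqrt_sq (by positivity)).symm
    _ ≤ Real.sqrt ((s.card : ℝ)⁻¹ * ∑ g ∈ s, ‖u g‖ ^ 2) := Real.sqrt_le_sqrt h2

end main2
end VdC

open VdC Finset in
/-- van der Corput lemma for Hilbert-space valued averages along a Følner sequence. -/
theorem stmt9 {G : Type*} [AddCommGroup G] [Countable G] [DecidableEq G]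
    {H : Type*} [NormedAddCommGroup H] [InnerProductSpace ℂ H] [CompleteSpace H]
    (F : ℕ → Finset G) (hF : IsFolner F)
    (x : G → H) (C : ℝ) (hbdd : ∀ g, ‖x g‖ ≤ C)
    (L : G → ℂ)
    (hL : ∀ h : G, Tendsto
      (fun n => ((F n).card : ℂ)⁻¹ • ∑ g ∈ F n, (inner ℂ (x (g + h)) (x g) : ℂ))
      atTop (nhds (L h)))
    (hLavg : Tendsto (fun k => ((F k).card : ℂ)⁻¹ • ∑ h ∈ F k, L h) atTop (nhds 0)) :
    Tendsto (fun n => ‖((F n).card : ℂ)⁻¹ • ∑ g ∈ F n, x g‖) atTop (nhds 0) := by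
  classical
  have hC : (0:ℝ) ≤ C := le_trans (norm_nonneg _) (hbdd 0)
  -- abbreviations
  have hρ0 : ∀ k, (0:ℝ) ≤ Nn L (Av F k (vxi : G →₀ ℂ)) := fun k => nn_nonneg _ _
  -- key inequality (I): ρ k ≤ ρ m + η m k
  have hkey : ∀ m k, Nn L (Av F k (vxi : G →₀ ℂ)) ≤ Nn L (Av F m (vxi : G →₀ ℂ))
      + ((F m).card : ℝ)⁻¹ * ∑ h ∈ F m,
          (((symmDiff (F k) ((F k).image (h + ·))).card : ℝ) / (F k).card * C) := by
    intro m k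
    have h1 := nn_le_add hF hbdd hL (Av F k (vxi : G →₀ ℂ)) (Av F m (Av F k vxi))
    rw [show Av F k (vxi : G →₀ ℂ) - Av F m (Av F k vxi)
        = -(Av F m (Av F k vxi) - Av F k vxi) by abel, nn_neg hF hbdd hL] at h1
    have h2 : Nn L (Av F m (Av F k (vxi : G →₀ ℂ))) ≤ Nn L (Av F m (vxi : G →₀ ℂ)) := by
      rw [av_comm]
      exact nn_av_le hF hbdd hL k _
    have h3 := nn_av_av_sub hF hbdd hL m k
    linarith
  -- the infimum
  have hbdd_below : BddBelow (Set.range fun m => Nn L (Av F m (vxi : G →₀ ℂ))) := by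
    refine ⟨0, ?_⟩
    rintro y ⟨m, rfl⟩
    exact hρ0 m
  have hIle : ∀ m, (⨅ j, Nn L (Av F j (vxi : G →₀ ℂ))) ≤ Nn L (Av F m (vxi : G →₀ ℂ)) :=
    fun m => ciInf_le hbdd_below m
  have hI0 : (0:ℝ) ≤ ⨅ j, Nn L (Av F j (vxi : G →₀ ℂ)) := le_ciInf hρ0
  -- ρ tends to the infimum
  have hρtendsto : Tendsto (fun k => Nn L (Av F k (vxi : G →₀ ℂ))) atTop
      (nhds (⨅ j, Nn L (Av F j (vxi : G →₀ ℂ)))) := by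
    refine tendsto_order.2 ⟨fun a ha => ?_, fun a ha => ?_⟩
    · filter_upwards with k
      exact lt_of_lt_of_le ha (hIle k)
    · obtain ⟨m, hm⟩ := exists_lt_of_ciInf_lt
        (show (⨅ j, Nn L (Av F j (vxi : G →₀ ℂ)))
          < ((⨅ j, Nn L (Av F j (vxi : G →₀ ℂ))) + a) / 2 by linarith)
      have hev := (eta_tendsto (C := C) hF m).eventually_lt_const
        (show (0:ℝ) < (a - (⨅ j, Nn L (Av F j (vxi : G →₀ ℂ)))) / 2 by linarith)
      filter_upwards [hev] with k hk
      have h4 := hkey m k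
      linarith
  -- midpoint lower bound
  have hmid : ∀ k m, (⨅ j, Nn L (Av F j (vxi : G →₀ ℂ)))
      ≤ Nn L ((2:ℂ)⁻¹ • (Av F k (vxi : G →₀ ℂ) + Av F m (vxi : G →₀ ℂ))) := by
    intro k m
    have hj : ∀ j, Nn L (Av F j (vxi : G →₀ ℂ))
        ≤ Nn L ((2:ℂ)⁻¹ • (Av F k (vxi : G →₀ ℂ) + Av F m (vxi : G →₀ ℂ)))
          + (((F k).card : ℝ)⁻¹ * ∑ h ∈ F k,
              (((symmDiff (F j) ((F j).image (h + ·))).card : ℝ) / (F j).card * C)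
            + ((F m).card : ℝ)⁻¹ * ∑ h ∈ F m,
              (((symmDiff (F j) ((F j).image (h + ·))).card : ℝ) / (F j).card * C)) / 2 := by
      intro j
      have e1 : Av F j ((2:ℂ)⁻¹ • (Av F k (vxi : G →₀ ℂ) + Av F m (vxi : G →₀ ℂ)))
            - Av F j (vxi : G →₀ ℂ)
          = (2:ℂ)⁻¹ • ((Av F k (Av F j (vxi : G →₀ ℂ)) - Av F j vxi)
              + (Av F m (Av F j (vxi : G →₀ ℂ)) - Av F j vxi)) := by
        rw [av_smul, av_add, av_comm j k, av_comm j m]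
        rw [show (Av F k (Av F j (vxi : G →₀ ℂ)) - Av F j vxi)
              + (Av F m (Av F j (vxi : G →₀ ℂ)) - Av F j vxi)
            = Av F k (Av F j (vxi : G →₀ ℂ)) + Av F m (Av F j (vxi : G →₀ ℂ))
              - (2:ℂ) • Av F j vxi by rw [two_smul]; abel]
        rw [smul_sub, smul_smul, inv_mul_cancel₀ (two_ne_zero), one_smul]
      have e2 : Nn L (Av F j ((2:ℂ)⁻¹ • (Av F k (vxi : G →₀ ℂ) + Av F m (vxi : G →₀ ℂ)))
            - Av F j (vxi : G →₀ ℂ))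
          ≤ (((F k).card : ℝ)⁻¹ * ∑ h ∈ F k,
              (((symmDiff (F j) ((F j).image (h + ·))).card : ℝ) / (F j).card * C)
            + ((F m).card : ℝ)⁻¹ * ∑ h ∈ F m,
              (((symmDiff (F j) ((F j).image (h + ·))).card : ℝ) / (F j).card * C)) / 2 := by
        rw [e1, nn_smul hF hbdd hL]
        have h5 := (nn_add_le hF hbdd hL (Av F k (Av F j (vxi : G →₀ ℂ)) - Av F j vxi)
          (Av F m (Av F j (vxi : G →₀ ℂ)) - Av F j vxi))
        have h6 := nn_av_av_sub hF hbdd hL k j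
        have h7 := nn_av_av_sub hF hbdd hL m j
        have h8 : ‖(2:ℂ)⁻¹‖ = 2⁻¹ := by
          rw [norm_inv]
          norm_num
        rw [h8]
        have h9 : (0:ℝ) ≤ Nn L ((Av F k (Av F j (vxi : G →₀ ℂ)) - Av F j vxi)
            + (Av F m (Av F j (vxi : G →₀ ℂ)) - Av F j vxi)) := nn_nonneg _ _
        linarith
      have e3 := nn_le_add hF hbdd hL (Av F j (vxi : G →₀ ℂ))
        (Av F j ((2:ℂ)⁻¹ • (Av F k (vxi : G →₀ ℂ) + Av F m (vxi : G →₀ ℂ))))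
      rw [show Av F j (vxi : G →₀ ℂ)
            - Av F j ((2:ℂ)⁻¹ • (Av F k (vxi : G →₀ ℂ) + Av F m (vxi : G →₀ ℂ)))
          = -(Av F j ((2:ℂ)⁻¹ • (Av F k (vxi : G →₀ ℂ) + Av F m (vxi : G →₀ ℂ)))
            - Av F j (vxi : G →₀ ℂ)) by abel, nn_neg hF hbdd hL] at e3
      have e4 := nn_av_le hF hbdd hL j
        ((2:ℂ)⁻¹ • (Av F k (vxi : G →₀ ℂ) + Av F m (vxi : G →₀ ℂ)))
      linarith
    have hseq : Tendsto (fun j => Nn L (Av F j (vxi : G →₀ ℂ))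
        - (((F k).card : ℝ)⁻¹ * ∑ h ∈ F k,
            (((symmDiff (F j) ((F j).image (h + ·))).card : ℝ) / (F j).card * C)
          + ((F m).card : ℝ)⁻¹ * ∑ h ∈ F m,
            (((symmDiff (F j) ((F j).image (h + ·))).card : ℝ) / (F j).card * C)) / 2)
        atTop (nhds (⨅ j, Nn L (Av F j (vxi : G →₀ ℂ)))) := by
      have := hρtendsto.sub (((eta_tendsto (C := C) hF k).add (eta_tendsto (C := C) hF m)).div_const 2)
      simpa using this
    exact le_of_tendsto_of_tendsto' hseq tendsto_const_nhds fun j => by linarith [hj j]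
  -- the infimum is zero
  have hI_eq : (⨅ j, Nn L (Av F j (vxi : G →₀ ℂ))) = 0 := by
    have hρsq : Tendsto (fun k => Nn L (Av F k (vxi : G →₀ ℂ)) ^ 2) atTop
        (nhds ((⨅ j, Nn L (Av F j (vxi : G →₀ ℂ))) ^ 2)) := by
      simpa [pow_two] using hρtendsto.mul hρtendsto
    have h3m : ∀ m, 3 * (⨅ j, Nn L (Av F j (vxi : G →₀ ℂ))) ^ 2
        ≤ Nn L (Av F m (vxi : G →₀ ℂ)) ^ 2 := by
      intro m
      have hk4 : ∀ k, 4 * (⨅ j, Nn L (Av F j (vxi : G →₀ ℂ))) ^ 2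
          ≤ Nn L (Av F k (vxi : G →₀ ℂ)) ^ 2 + Nn L (Av F m (vxi : G →₀ ℂ)) ^ 2
            + 2 * (Lam L (Av F k (vxi : G →₀ ℂ)) (Av F m (vxi : G →₀ ℂ))).re := by
        intro k
        have hexp : (Lam L (Av F k (vxi : G →₀ ℂ) + Av F m (vxi : G →₀ ℂ))
              (Av F k (vxi : G →₀ ℂ) + Av F m (vxi : G →₀ ℂ))).re
            = (Lam L (Av F k (vxi : G →₀ ℂ)) (Av F k (vxi : G →₀ ℂ))).re
              + (Lam L (Av F m (vxi : G →₀ ℂ)) (Av F m (vxi : G →₀ ℂ))).re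
              + 2 * (Lam L (Av F k (vxi : G →₀ ℂ)) (Av F m (vxi : G →₀ ℂ))).re := by
          rw [lam_add_left hF hbdd hL, lam_add_right hF hbdd hL, lam_add_right hF hbdd hL,
            lam_conj hF hbdd hL (Av F k (vxi : G →₀ ℂ)) (Av F m (vxi : G →₀ ℂ))]
          simp only [Complex.add_re, Complex.conj_re]
          ring
        have hsq : Nn L (Av F k (vxi : G →₀ ℂ) + Av F m (vxi : G →₀ ℂ)) ^ 2
            = Nn L (Av F k (vxi : G →₀ ℂ)) ^ 2 + Nn L (Av F m (vxi : G →₀ ℂ)) ^ 2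
              + 2 * (Lam L (Av F k (vxi : G →₀ ℂ)) (Av F m (vxi : G →₀ ℂ))).re := by
          rw [nn_sq hF hbdd hL, hexp, ← nn_sq hF hbdd hL (Av F k (vxi : G →₀ ℂ)),
            ← nn_sq hF hbdd hL (Av F m (vxi : G →₀ ℂ))]
        have hnn : Nn L ((2:ℂ)⁻¹ • (Av F k (vxi : G →₀ ℂ) + Av F m (vxi : G →₀ ℂ)))
            = 2⁻¹ * Nn L (Av F k (vxi : G →₀ ℂ) + Av F m (vxi : G →₀ ℂ)) := by
          rw [nn_smul hF hbdd hL, norm_inv]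
          norm_num
        have hm' := hmid k m
        rw [hnn] at hm'
        have hnn0 : (0:ℝ) ≤ Nn L (Av F k (vxi : G →₀ ℂ) + Av F m (vxi : G →₀ ℂ)) :=
          nn_nonneg _ _
        nlinarith [hI0]
      have hre : Tendsto (fun k =>
          (Lam L (Av F k (vxi : G →₀ ℂ)) (Av F m (vxi : G →₀ ℂ))).re) atTop (nhds 0) := by
        have := (Complex.continuous_re.tendsto _).comp
          (tendsto_lam_av_av hF hbdd hL hLavg m)
        exact this
      have hlim : Tendsto (fun k => Nn L (Av F k (vxi : G →₀ ℂ)) ^ 2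
          + Nn L (Av F m (vxi : G →₀ ℂ)) ^ 2
          + 2 * (Lam L (Av F k (vxi : G →₀ ℂ)) (Av F m (vxi : G →₀ ℂ))).re) atTop
          (nhds ((⨅ j, Nn L (Av F j (vxi : G →₀ ℂ))) ^ 2
            + Nn L (Av F m (vxi : G →₀ ℂ)) ^ 2 + 2 * 0)) :=
        (hρsq.add tendsto_const_nhds).add (hre.const_mul 2)
      have h5 := ge_of_tendsto hlim (Filter.Eventually.of_forall hk4)
      nlinarith [h5]
    have h6 : 3 * (⨅ j, Nn L (Av F j (vxi : G →₀ ℂ))) ^ 2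
        ≤ (⨅ j, Nn L (Av F j (vxi : G →₀ ℂ))) ^ 2 :=
      ge_of_tendsto hρsq (Filter.Eventually.of_forall h3m)
    nlinarith [hI0]
  have hρzero : Tendsto (fun k => Nn L (Av F k (vxi : G →₀ ℂ))) atTop (nhds 0) :=
    hI_eq ▸ hρtendsto
  -- final transfer
  suffices hfin : Tendsto (fun n => ((F n).card : ℂ)⁻¹ • ∑ g ∈ F n, x g) atTop (nhds (0:H)) by
    simpa using hfin.norm
  rw [NormedAddCommGroup.tendsto_nhds_zero]
  intro ε hε
  obtain ⟨k, hk⟩ : ∃ k, Nn L (Av F k (vxi : G →₀ ℂ)) < ε / 3 :=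
    (hρzero.eventually_lt_const (by positivity)).exists
  have hdiff := tendsto_avg_diff hF hbdd hL k
  have hdiff' : ∀ᶠ n in atTop, ‖(((F n).card : ℂ)⁻¹ • ∑ g ∈ F n, x g)
      - ((F n).card : ℂ)⁻¹ • ∑ g ∈ F n, Tt x (Av F k (vxi : G →₀ ℂ)) g‖ < ε / 3 :=
    (NormedAddCommGroup.tendsto_nhds_zero.1 hdiff) (ε / 3) (by positivity)
  have hsq : Tendsto (fun n => Real.sqrt (((F n).card : ℝ)⁻¹
      * ∑ g ∈ F n, ‖Tt x (Av F k (vxi : G →₀ ℂ)) g‖ ^ 2)) atTop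
      (nhds (Nn L (Av F k (vxi : G →₀ ℂ)))) :=
    (tendsto_lam_re hF hbdd hL (Av F k (vxi : G →₀ ℂ))).sqrt
  have hsq' := hsq.eventually_lt_const hk
  filter_upwards [hdiff', hsq'] with n h1 h2
  have h3 : ‖((F n).card : ℂ)⁻¹ • ∑ g ∈ F n, Tt x (Av F k (vxi : G →₀ ℂ)) g‖
      ≤ Real.sqrt (((F n).card : ℝ)⁻¹ * ∑ g ∈ F n, ‖Tt x (Av F k (vxi : G →₀ ℂ)) g‖ ^ 2) :=
    avg_norm_le_sqrt (F n) _
  have h4 : ‖((F n).card : ℂ)⁻¹ • ∑ g ∈ F n, x g‖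
      ≤ ‖(((F n).card : ℂ)⁻¹ • ∑ g ∈ F n, x g)
          - ((F n).card : ℂ)⁻¹ • ∑ g ∈ F n, Tt x (Av F k (vxi : G →₀ ℂ)) g‖
        + ‖((F n).card : ℂ)⁻¹ • ∑ g ∈ F n, Tt x (Av F k (vxi : G →₀ ℂ)) g‖ := by
    calc ‖((F n).card : ℂ)⁻¹ • ∑ g ∈ F n, x g‖
        = ‖((((F n).card : ℂ)⁻¹ • ∑ g ∈ F n, x g)
            - ((F n).card : ℂ)⁻¹ • ∑ g ∈ F n, Tt x (Av F k (vxi : G →₀ ℂ)) g)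
          + ((F n).card : ℂ)⁻¹ • ∑ g ∈ F n, Tt x (Av F k (vxi : G →₀ ℂ)) g‖ := by
          rw [sub_add_cancel]
      _ ≤ _ := norm_add_le _ _
  linarith
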